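/- Let K/F be a finite Galois field extension with norm N_{K/F}, σ ∈ Gal(K/F) of order n with Fix(σ) = F, and τ ∈ Gal(K/F) with σ ∘ τ = τ ∘ σ. Let f(t) = t^m − Σ_{i=0}^{m−1} a_i t^i ∈ K[t;σ] and suppose k ∈ K^× satisfies τ(a_i) = (∏_{l=i}^{m−1} σ^l(k))·a_i for all i ∈ {0,…,m−1}. Then: for every i with a_i ≠ 0, N_{K/F}(k) is an (m−i)-th root of unity; in particular, if a_0 ≠ 0 then N_{K/F}(k)^m = 1, and if a_{m−1} ≠ 0 then N_{K/F}(k) = 1. Moreover, if a_{m−1} ∈ Fix(τ)^× then k = 1. -/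

import Mathlib

/-! ## The Petit algebra `S_f = K[t;σ]/K[t;σ]f`

For a twisted polynomial ring `R = K[t;σ]` (multiplication determined by `t·a = σ(a)·t`)
and the monic skew polynomial `f(t) = t^m - Σ_{i<m} a_i t^i` (encoded by its coefficient
vector `a : Fin m → K`), the Petit algebra `S_f` is realised on coefficient vectors
`Fin m → K` (the polynomials of degree `< m`), with multiplication `g ∘ h = (gh) mod_r f`. -/

/-- The remainder of `t^s` after right division by `f(t) = t^m - Σ_{i<m} a_i t^i`:
for `s < m` it is `t^s` itself, and for `s ≥ m` one uses
`t^s ≡ Σ_i σ^{s-m}(a_i) t^{s-m+i} (mod R·f)`. -/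
noncomputable def tred {K : Type*} [Field K] (σ : K → K) (m : ℕ) (a : Fin m → K) (s : ℕ) :
    Fin m → K :=
  if _h : s < m then (fun i => if (i : ℕ) = s then (1 : K) else 0)
  else ∑ i : Fin m, σ^[s - m] (a i) • tred σ m a (s - m + (i : ℕ))
termination_by s
decreasing_by
  have hi := i.isLt
  omega

/-- The multiplication `g ∘ h = (gh) mod_r f` of the Petit algebra `S_f`. -/
noncomputable def pmul {K : Type*} [Field K] (σ : K → K) {m : ℕ} (a : Fin m → K)
    (x y : Fin m → K) : Fin m → K :=
  ∑ i : Fin m, ∑ j : Fin m, (x i * σ^[(i : ℕ)] (y j)) • tred σ m a ((i : ℕ) + (j : ℕ))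

/-- The unit element `1` of `S_f`. -/
noncomputable def pone (K : Type*) [Field K] (m : ℕ) : Fin m → K :=
  fun i => if (i : ℕ) = 0 then 1 else 0

/-- The element `t` of `S_f`. -/
noncomputable def tvec (K : Type*) [Field K] (m : ℕ) : Fin m → K :=
  fun i => if (i : ℕ) = 1 then 1 else 0

/-- The canonical copy of `c ∈ K` inside `S_f`. -/
noncomputable def iota (K : Type*) [Field K] (m : ℕ) (c : K) : Fin m → K :=
  fun i => if (i : ℕ) = 0 then c else 0

/-- `S_f` is associative; by Petit's theorem this holds if and only if `f` is
invariant (i.e. `R·f` is a two-sided ideal of `R = K[t;σ]`). -/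
def PAssoc {K : Type*} [Field K] (σ : K → K) {m : ℕ} (a : Fin m → K) : Prop :=
  ∀ x y z : Fin m → K, pmul σ a (pmul σ a x y) z = pmul σ a x (pmul σ a y z)

/-- `H` is an automorphism of the algebra `S_f` over `F = Fix(σ)`: an `F`-linear
bijection preserving the multiplication and the unit. -/
structure IsPetitAut {K : Type*} [Field K] (σ : K → K) {m : ℕ} (a : Fin m → K)
    (H : (Fin m → K) → (Fin m → K)) : Prop where
  bijective : Function.Bijective H
  map_add : ∀ x y, H (x + y) = H x + H y
  map_smul : ∀ c : K, σ c = c → ∀ x, H (c • x) = c • H x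
  map_mul : ∀ x y, H (pmul σ a x y) = pmul σ a (H x) (H y)
  map_one : H (pone K m) = pone K m

/-- `H` is an inner automorphism `x ↦ (c_l ∘ x) ∘ c` of `S_f`, where `c_l` is a
left inverse of `c`. -/
def IsInnerPetit {K : Type*} [Field K] (σ : K → K) {m : ℕ} (a : Fin m → K)
    (H : (Fin m → K) → (Fin m → K)) : Prop :=
  ∃ c cl : Fin m → K, pmul σ a cl c = pone K m ∧
    ∀ x, H x = pmul σ a (pmul σ a cl x) c

/-- The map `H_{τ,k} : Σ x_i t^i ↦ τ(x_0) + Σ_{i≥1} τ(x_i)·(Π_{l<i} σ^l(k))·t^i`. -/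
noncomputable def Hmap {K : Type*} [Field K] (σ τ : K → K) {m : ℕ} (k : K)
    (x : Fin m → K) : Fin m → K :=
  fun i => τ (x i) * ∏ l ∈ Finset.range (i : ℕ), σ^[l] k

lemma norm_iter_aux {F K : Type*} [Field F] [Field K] [Algebra F K]
    (σ : K ≃ₐ[F] K) (l : ℕ) (x : K) :
    Algebra.norm F ((⇑σ)^[l] x) = Algebra.norm F x := by
  induction l with
  | zero => rfl
  | succ n ih =>
      rw [Function.iterate_succ_apply', Algebra.norm_eq_of_algEquiv, ih]

/-- **Proposition 3.1.** Let `K/F` be a finite Galois field extension with norm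
`N_{K/F}`, `σ ∈ Gal(K/F)` with `Fix(σ) = F`, and `τ ∈ Gal(K/F)` commuting with `σ`.
If `k ∈ K^×` satisfies `τ(a_i) = (Π_{l=i}^{m−1} σ^l(k))·a_i` for all `i`, then for
every `i` with `a_i ≠ 0` the norm `N_{K/F}(k)` is an `(m−i)`-th root of unity; in
particular `N_{K/F}(k)^m = 1` if `a₀ ≠ 0` and `N_{K/F}(k) = 1` if `a_{m−1} ≠ 0`;
and if `a_{m−1} ∈ Fix(τ)^×` then `k = 1`. -/
theorem stmt9 {F K : Type*} [Field F] [Field K] [Algebra F K]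
    [FiniteDimensional F K] [IsGalois F K]
    (σ τ : K ≃ₐ[F] K)
    (hfix : ∀ x : K, σ x = x ↔ x ∈ Set.range (algebraMap F K))
    (hcomm : ∀ x : K, σ (τ x) = τ (σ x))
    (m : ℕ) (hm : 2 ≤ m) (a : Fin m → K)
    (k : K) (hk : k ≠ 0)
    (hcond : ∀ i : Fin m, τ (a i) = (∏ l ∈ Finset.Ico (i : ℕ) m, (⇑σ)^[l] k) * a i) :
    (∀ i : Fin m, a i ≠ 0 → Algebra.norm F k ^ (m - (i : ℕ)) = 1)
    ∧ (a ⟨0, by omega⟩ ≠ 0 → Algebra.norm F k ^ m = 1)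
    ∧ (a ⟨m - 1, by omega⟩ ≠ 0 → Algebra.norm F k = 1)
    ∧ (a ⟨m - 1, by omega⟩ ≠ 0 → τ (a ⟨m - 1, by omega⟩) = a ⟨m - 1, by omega⟩ → k = 1) := by
  have hmain : ∀ i : Fin m, a i ≠ 0 → Algebra.norm F k ^ (m - (i : ℕ)) = 1 := by
    intro i hne
    have h := congrArg (Algebra.norm F) (hcond i)
    rw [Algebra.norm_eq_of_algEquiv, map_mul, map_prod] at h
    have hprod : (∏ l ∈ Finset.Ico (i : ℕ) m, Algebra.norm F ((⇑σ)^[l] k))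
        = Algebra.norm F k ^ (m - (i : ℕ)) := by
      rw [Finset.prod_congr rfl (fun l _ => norm_iter_aux σ l k), Finset.prod_const,
        Nat.card_Ico]
    rw [hprod] at h
    have hnz : Algebra.norm F (a i) ≠ 0 := by
      rwa [Algebra.norm_ne_zero_iff]
    field_simp at h
    exact h.symm
  have h1 := hmain ⟨m - 1, by omega⟩ 
  refine ⟨hmain, ?_, ?_, ?_⟩
  · intro h0
    have := hmain ⟨0, by omega⟩ h0
    simpa using this
  · intro h0
    have := h1 h0
    simp only at this
    rwa [show m - (m - 1) = 1 by omega, pow_one] at this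
  · intro h0 hfixa
    have h := hcond ⟨m - 1, by omega⟩
    rw [hfixa] at h
    simp only at h
    have hprod : (∏ l ∈ Finset.Ico (m - 1 : ℕ) m, (⇑σ)^[l] k) = (⇑σ)^[m - 1] k := by
      rw [show Finset.Ico (m - 1) m = {m - 1} by
        ext x; simp [Finset.mem_Ico]; omega, Finset.prod_singleton]
    rw [hprod] at h
    have hone : (⇑σ)^[m - 1] k = 1 := by
      have h' : (⇑σ)^[m - 1] k * a ⟨m - 1, by omega⟩ = 1 * a ⟨m - 1, by omega⟩ := by
        rw [one_mul]; exact h.symm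
      exact mul_right_cancel₀ h0 h'
    have hinj : Function.Injective ((⇑σ)^[m - 1]) :=
      Function.Injective.iterate σ.injective _
    have : (⇑σ)^[m - 1] k = (⇑σ)^[m - 1] 1 := by
      rw [hone, Function.iterate_fixed (by simp)]
    exact hinj this
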